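/- arXiv:2108.08947 — 2 statements merged into one kernel-verified Lean document; each statement's English description precedes it below -/
import Mathlib

section
/- (Kummer recurrence 13.4.5) For real a, b, x with b, b+1 nonzero and avoiding nonpositive-integer issues in the series: b(a+x)·₁F₁(a;b;x) + x(a−b)·₁F₁(a;b+1;x) − a·b·₁F₁(a+1;b;x) = 0. -/
open Polynomial

/-- Ascending factorial (Pochhammer symbol). -/
noncomputable def asc (a : ℝ) (n : ℕ) : ℝ := (ascPochhammer ℝ n).eval a

/-- Kummer confluent hypergeometric function `₁F₁(a; b; x)`. -/
noncomputable def F11 (a b x : ℝ) : ℝ := ∑' i : ℕ, asc a i / asc b i * x ^ i / (i.factorial : ℝ)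

lemma asc_zero (a : ℝ) : asc a 0 = 1 := by simp [asc]

lemma asc_succ (a : ℝ) (n : ℕ) : asc a (n+1) = asc a n * (a + n) := by
  simp [asc, ascPochhammer_succ_right]

lemma asc_succ' (a : ℝ) (n : ℕ) : asc a (n+1) = a * asc (a+1) n := by
  simp [asc, ascPochhammer_succ_left, add_comm]

lemma asc_ne (b : ℝ) (hb : ∀ n : ℕ, b ≠ -(n : ℝ)) : ∀ n, asc b n ≠ 0 := by
  intro n
  induction n with
  | zero => simp [asc_zero]
  | succ k ih =>
    rw [asc_succ]
    refine mul_ne_zero ih ?_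
    intro h
    exact hb k (by linarith)

lemma summable_term (a b x : ℝ) (hb : ∀ n : ℕ, b ≠ -(n : ℝ)) :
    Summable (fun i : ℕ => asc a i / asc b i * x ^ i / (i.factorial : ℝ)) := by
  set f : ℕ → ℝ := fun i => asc a i / asc b i * x ^ i / (i.factorial : ℝ) with hf
  apply summable_of_ratio_norm_eventually_le (r := 1/2) (by norm_num)
  filter_upwards [Filter.eventually_ge_atTop (⌈2*|b| + 2*|a| + 8*|x| + 1⌉₊)] with i hi
  have hiR : (2*|b| + 2*|a| + 8*|x| + 1 : ℝ) ≤ i := le_trans (Nat.le_ceil _) (by exact_mod_cast hi)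
  have hb0 : |b| ≥ 0 := abs_nonneg b
  have ha0 : |a| ≥ 0 := abs_nonneg a
  have hx0 : |x| ≥ 0 := abs_nonneg x
  have hbi : b + i ≠ 0 := fun h => hb i (by linarith)
  have hQ : asc b i ≠ 0 := asc_ne b hb i
  have hfac : ((i.factorial : ℝ)) ≠ 0 := Nat.cast_ne_zero.2 i.factorial_ne_zero
  have hi1 : ((i:ℝ) + 1) ≠ 0 := by positivity
  have hstep : f (i+1) = f i * ((a + i) * x / ((b + i) * ((i:ℝ) + 1))) := by
    simp only [hf, asc_succ]
    have : (((i+1).factorial : ℝ)) = (i.factorial : ℝ) * ((i:ℝ)+1) := by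
      push_cast [Nat.factorial_succ]; ring
    rw [this, pow_succ]
    field_simp
  rw [hstep, norm_mul]
  rw [mul_comm (1/2 : ℝ)]
  apply mul_le_mul_of_nonneg_left _ (norm_nonneg _)
  have : ‖(a + i) * x / ((b + i) * ((i:ℝ) + 1))‖ = |a + i| * |x| / (|b + i| * |(i:ℝ) + 1|) := by
    simp [abs_mul, abs_div]
  rw [this]
  rw [div_le_iff₀ (by positivity : (0:ℝ) < |b + i| * |(i:ℝ)+1|)]
  have h1 : |a + (i:ℝ)| ≤ |a| + i := by
    calc |a + (i:ℝ)| ≤ |a| + |(i:ℝ)| := abs_add_le _ _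
    _ = |a| + i := by rw [abs_of_nonneg (by positivity : (0:ℝ) ≤ (i:ℝ))]
  have h2 : (i:ℝ) - |b| ≤ |b + i| := by
    have h4 : |(i:ℝ)| ≤ |b + i| + |b| := by
      have := abs_sub (b + i) b
      simpa using this
    have hii : |(i:ℝ)| = (i:ℝ) := abs_of_nonneg (by positivity)
    linarith
  have h3 : |(i:ℝ) + 1| = (i:ℝ) + 1 := abs_of_nonneg (by positivity)
  rw [h3]
  nlinarith [abs_nonneg (b + (i:ℝ)), mul_le_mul_of_nonneg_left h2 (by linarith : (0:ℝ) ≤ (i:ℝ)+1)]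

lemma kummer_key (a b x : ℝ) (hb : ∀ n : ℕ, b ≠ -(n : ℝ)) (hb1 : ∀ n : ℕ, b + 1 ≠ -(n : ℝ))
    (i : ℕ) :
    a*b*(asc a (i+1)/asc b (i+1) * x^(i+1)/((i+1).factorial : ℝ)
      - asc (a+1) (i+1)/asc b (i+1) * x^(i+1)/((i+1).factorial : ℝ))
    = -(x*(b*(asc a i/asc b i * x^i/(i.factorial : ℝ))
      + (a-b)*(asc a i/asc (b+1) i * x^i/(i.factorial : ℝ)))) := by
  have hQ : asc b i ≠ 0 := asc_ne b hb i
  have hS : asc (b+1) i ≠ 0 := asc_ne (b+1) hb1 i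
  have hbi : b + (i:ℝ) ≠ 0 := fun h => hb i (by linarith)
  have hb0 : b ≠ 0 := by have := hb 0; simpa using this
  have hfac : ((i.factorial : ℝ)) ≠ 0 := Nat.cast_ne_zero.2 i.factorial_ne_zero
  have hfacs : (((i+1).factorial : ℝ)) = (i.factorial : ℝ) * ((i:ℝ)+1) := by
    push_cast [Nat.factorial_succ]; ring
  have hi1 : ((i:ℝ) + 1) ≠ 0 := by positivity
  have hbrel : asc (b+1) i = asc b i * (b + i) / b := by
    have h1 := asc_succ' b i
    have h2 := asc_succ b i
    field_simp
    linarith [h1, h2]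
  rcases eq_or_ne a 0 with ha | ha
  · subst ha
    rcases i with _ | k
    · simp [asc_zero]
    · have h0 : asc 0 (k+1) = 0 := by rw [asc_succ']; ring
      have h0' : asc 0 (k+1+1) = 0 := by rw [asc_succ']; ring
      rw [h0, h0', hbrel]
      field_simp
      ring
  · have ha1 : asc (a+1) (i+1) = asc a i * (a + i) * (a + i + 1) / a := by
      have h1 := asc_succ' a (i+1)
      have h2 : asc a (i+1+1) = asc a i * (a+i) * (a + i + 1) := by
        rw [asc_succ, asc_succ]; push_cast; ring
      field_simp
      linarith [h1, h2]
    rw [ha1, hbrel, asc_succ a i, asc_succ b i, hfacs, pow_succ]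
    field_simp
    ring

theorem kummer_recurrence_13_4_5 (a b x : ℝ)
    (hb : ∀ n : ℕ, b ≠ -(n : ℝ)) (hb1 : ∀ n : ℕ, b + 1 ≠ -(n : ℝ)) :
    b * (a + x) * F11 a b x + x * (a - b) * F11 a (b + 1) x - a * b * F11 (a + 1) b x = 0 := by
  set T1 : ℕ → ℝ := fun i => asc a i / asc b i * x ^ i / (i.factorial : ℝ) with hT1
  set T2 : ℕ → ℝ := fun i => asc a i / asc (b+1) i * x ^ i / (i.factorial : ℝ) with hT2
  set T3 : ℕ → ℝ := fun i => asc (a+1) i / asc b i * x ^ i / (i.factorial : ℝ) with hT3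
  have s1 : Summable T1 := summable_term a b x hb
  have s2 : Summable T2 := summable_term a (b+1) x hb1
  have s3 : Summable T3 := summable_term (a+1) b x hb
  set f1 : ℕ → ℝ := fun i => a * b * (T1 i - T3 i) with hf1
  set f2 : ℕ → ℝ := fun i => x * (b * T1 i + (a - b) * T2 i) with hf2
  have sf1 : Summable f1 := ((s1.sub s3).mul_left (a*b))
  have sf2 : Summable f2 := (((s1.mul_left b).add (s2.mul_left (a-b))).mul_left x)
  have hF1 : F11 a b x = ∑' i, T1 i := rfl
  have hF2 : F11 a (b+1) x = ∑' i, T2 i := rfl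
  have hF3 : F11 (a+1) b x = ∑' i, T3 i := rfl
  have hsplit : b * (a + x) * F11 a b x + x * (a - b) * F11 a (b + 1) x - a * b * F11 (a + 1) b x
      = (∑' i, f1 i) + (∑' i, f2 i) := by
    rw [hF1, hF2, hF3, ← tsum_mul_left (a := b * (a + x)), ← tsum_mul_left (a := x * (a-b)),
      ← tsum_mul_left (a := a * b)]
    rw [← Summable.tsum_add (s1.mul_left (b*(a+x))) (s2.mul_left (x*(a-b))),
      ← Summable.tsum_sub ((s1.mul_left (b*(a+x))).add (s2.mul_left (x*(a-b)))) (s3.mul_left (a*b)),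
      ← Summable.tsum_add sf1 sf2]
    congr 1
    funext i
    simp only [hf1, hf2]
    ring
  rw [hsplit]
  have hkey : ∀ i : ℕ, f1 (i+1) = -(f2 i) := fun i => kummer_key a b x hb hb1 i
  have hf10 : f1 0 = 0 := by
    simp [hf1, hT1, hT3, asc_zero]
  rw [Summable.tsum_eq_zero_add sf1, hf10]
  have : ∑' i : ℕ, f1 (i+1) = ∑' i : ℕ, -(f2 i) := by
    congr 1
    funext i
    exact hkey i
  rw [this, tsum_neg]
  ring
end

section
/- For natural numbers m, j₁, j₂ and reals θ₁, θ₂ with θ₁,θ₂ ≥ 0, θ₁+θ₂ ≤ 1: Σ_{l₁+l₂ ≤ m} (l₁+1)_{j₁}(l₂+1)_{j₂} · (m!/(l₁!l₂!(m−l₁−l₂)!)) θ₁^{l₁}θ₂^{l₂}(1−θ₁−θ₂)^{m−l₁−l₂} = j₁! j₂! Σ_{l₁+l₂ ≤ m} C(l₁+j₁,l₁) C(j₂,l₂) (m!/(l₁!l₂!(m−l₁−l₂)!)) (1−θ₁)^{m−l₁−l₂} θ₁^{l₁} θ₂^{l₂}. -/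
open Polynomial Finset

lemma asc_nat_succ (l j : ℕ) :
    asc ((l : ℝ) + 1) j = (j.factorial : ℝ) * ((l + j).choose l : ℝ) := by
  have h : ((l : ℝ) + 1) = ((l + 1 : ℕ) : ℝ) := by push_cast; ring
  rw [asc, h, ← ascPochhammer_eval_cast, ascPochhammer_nat_eq_ascFactorial,
    Nat.ascFactorial_eq_factorial_mul_choose, ← Nat.choose_symm_add]
  push_cast; ring

lemma chch {n l i : ℕ} (h : l + i ≤ n) :
    n.choose l * (n - l).choose i = n.choose i * (n - i).choose l := by
  have h1 := Nat.choose_mul (n := n) (k := l + i) (s := l) (Nat.le_add_right _ _)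
  have h2 := Nat.choose_mul (n := n) (k := l + i) (s := i) (Nat.le_add_left _ _)
  rw [Nat.add_sub_cancel_left] at h1
  rw [Nat.add_sub_cancel] at h2
  rw [Nat.choose_symm_add] at h1
  omega

lemma vand (j k : ℕ) :
    ∑ l ∈ range (k + 1), j.choose l * k.choose l = (j + k).choose k := by
  rw [Nat.add_choose_eq, Finset.Nat.sum_antidiagonal_eq_sum_range_succ_mk]
  refine Finset.sum_congr rfl fun l hl => ?_
  rw [Nat.choose_symm (Nat.lt_succ_iff.mp (Finset.mem_range.mp hl))]

lemma key (n j : ℕ) (t u : ℝ) :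
    ∑ l ∈ range (n + 1), (j.choose l : ℝ) * (n.choose l : ℝ) * (u + t) ^ (n - l) * t ^ l
      = ∑ k ∈ range (n + 1), ((k + j).choose k : ℝ) * (n.choose k : ℝ) * t ^ k * u ^ (n - k) := by
  have expand : ∀ l ∈ range (n + 1),
      (j.choose l : ℝ) * (n.choose l : ℝ) * (u + t) ^ (n - l) * t ^ l
        = ∑ i ∈ range (n + 1),
            (j.choose l : ℝ) * (n.choose l : ℝ) * ((n - l).choose i : ℝ)
              * u ^ i * t ^ (n - l - i) * t ^ l := by
    intro l hl
    rw [add_pow, Finset.mul_sum, Finset.sum_mul]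
    rw [Finset.sum_subset (Finset.range_subset_range.mpr (show n - l + 1 ≤ n + 1 by omega))]
    · exact Finset.sum_congr rfl fun i hi => by ring
    · intro i hi hni
      simp only [Finset.mem_range] at hi hni
      have : (n - l).choose i = 0 := Nat.choose_eq_zero_of_lt (by omega)
      simp [this]
  rw [Finset.sum_congr rfl expand, Finset.sum_comm]
  have step : ∀ i ∈ range (n + 1),
      (∑ l ∈ range (n + 1),
        (j.choose l : ℝ) * (n.choose l : ℝ) * ((n - l).choose i : ℝ)
          * u ^ i * t ^ (n - l - i) * t ^ l)
        = ((j + (n - i)).choose (n - i) : ℝ) * (n.choose i : ℝ) * t ^ (n - i) * u ^ i := by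
    intro i hi
    have hi' : i ≤ n := Nat.lt_succ_iff.mp (Finset.mem_range.mp hi)
    rw [← Finset.sum_subset (Finset.range_subset_range.mpr (by omega : n - i + 1 ≤ n + 1))
      (by
        intro l hl hnl
        simp only [Finset.mem_range] at hl hnl
        have : (n - l).choose i = 0 := Nat.choose_eq_zero_of_lt (by omega)
        simp [this])]
    have congr1 : ∀ l ∈ range (n - i + 1),
        (j.choose l : ℝ) * (n.choose l : ℝ) * ((n - l).choose i : ℝ)
            * u ^ i * t ^ (n - l - i) * t ^ l
          = ((j.choose l * (n - i).choose l : ℕ) : ℝ) * ((n.choose i : ℝ) * t ^ (n - i) * u ^ i) := by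
      intro l hl
      have hl' : l ≤ n - i := Nat.lt_succ_iff.mp (Finset.mem_range.mp hl)
      have hli : l + i ≤ n := by omega
      have hc : (n.choose l : ℝ) * ((n - l).choose i : ℝ)
          = (n.choose i : ℝ) * ((n - i).choose l : ℝ) := by
        exact_mod_cast chch hli
      have hpow : t ^ (n - l - i) * t ^ l = t ^ (n - i) := by
        rw [← pow_add]; congr 1; omega
      push_cast
      calc (j.choose l : ℝ) * (n.choose l : ℝ) * ((n - l).choose i : ℝ)
            * u ^ i * t ^ (n - l - i) * t ^ l
          = (j.choose l : ℝ) * ((n.choose l : ℝ) * ((n - l).choose i : ℝ))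
            * u ^ i * (t ^ (n - l - i) * t ^ l) := by ring
        _ = _ := by rw [hc, hpow]; ring
    rw [Finset.sum_congr rfl congr1, ← Finset.sum_mul, ← Nat.cast_sum, vand]
    push_cast; ring
  rw [Finset.sum_congr rfl step, ← Finset.sum_range_reflect]
  refine Finset.sum_congr rfl fun k hk => ?_
  have hk' : k ≤ n := Nat.lt_succ_iff.mp (Finset.mem_range.mp hk)
  simp only [Nat.add_sub_cancel]
  rw [Nat.sub_sub_self hk', Nat.choose_symm hk', Nat.add_comm j k]

/-- Intermediate combinatorial step (one application of Ljunggren's identity) in computing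
Multinomial factorial moments. -/
theorem multinomial_factorial_moment_step (m j1 j2 : ℕ) (θ1 θ2 : ℝ)
    (h1 : 0 ≤ θ1) (h2 : 0 ≤ θ2) (hsum : θ1 + θ2 ≤ 1) :
    ∑ l1 ∈ range (m + 1), ∑ l2 ∈ range (m - l1 + 1),
        asc ((l1 : ℝ) + 1) j1 * asc ((l2 : ℝ) + 1) j2 *
          ((m.factorial : ℝ) /
              ((l1.factorial : ℝ) * (l2.factorial : ℝ) * ((m - l1 - l2).factorial : ℝ)) *
            θ1 ^ l1 * θ2 ^ l2 * (1 - θ1 - θ2) ^ (m - l1 - l2)) =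
      (j1.factorial : ℝ) * (j2.factorial : ℝ) *
        ∑ l1 ∈ range (m + 1), ∑ l2 ∈ range (m - l1 + 1),
          ((l1 + j1).choose l1 : ℝ) * (j2.choose l2 : ℝ) *
            ((m.factorial : ℝ) /
                ((l1.factorial : ℝ) * (l2.factorial : ℝ) * ((m - l1 - l2).factorial : ℝ))) *
            (1 - θ1) ^ (m - l1 - l2) * θ1 ^ l1 * θ2 ^ l2 := by
  rw [Finset.mul_sum]
  refine Finset.sum_congr rfl fun l1 hl1 => ?_
  have hl1' : l1 ≤ m := Nat.lt_succ_iff.mp (Finset.mem_range.mp hl1)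
  set n := m - l1 with hn
  set C : ℝ := (j1.factorial : ℝ) * ((l1 + j1).choose l1 : ℝ) * (m.choose l1 : ℝ)
      * θ1 ^ l1 * (j2.factorial : ℝ) with hC
  have ratio : ∀ l2 ∈ range (n + 1),
      (m.factorial : ℝ) /
          ((l1.factorial : ℝ) * (l2.factorial : ℝ) * ((n - l2).factorial : ℝ))
        = (m.choose l1 : ℝ) * (n.choose l2 : ℝ) := by
    intro l2 hl2
    have hl2' : l2 ≤ n := Nat.lt_succ_iff.mp (Finset.mem_range.mp hl2)
    have hne : ((l1.factorial : ℝ) * (l2.factorial : ℝ) * ((n - l2).factorial : ℝ)) ≠ 0 := by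
      positivity
    rw [div_eq_iff hne]
    have e1 : m.choose l1 * l1.factorial * n.factorial = m.factorial :=
      Nat.choose_mul_factorial_mul_factorial hl1'
    have e2 : n.choose l2 * l2.factorial * (n - l2).factorial = n.factorial :=
      Nat.choose_mul_factorial_mul_factorial hl2'
    rw [← e1, ← e2]
    push_cast; ring
  have lhs_eq : (∑ l2 ∈ range (n + 1),
      asc ((l1 : ℝ) + 1) j1 * asc ((l2 : ℝ) + 1) j2 *
        ((m.factorial : ℝ) /
            ((l1.factorial : ℝ) * (l2.factorial : ℝ) * ((n - l2).factorial : ℝ)) *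
          θ1 ^ l1 * θ2 ^ l2 * (1 - θ1 - θ2) ^ (n - l2)))
      = C * ∑ l2 ∈ range (n + 1),
          ((l2 + j2).choose l2 : ℝ) * (n.choose l2 : ℝ) * θ2 ^ l2
            * (1 - θ1 - θ2) ^ (n - l2) := by
    rw [Finset.mul_sum]
    refine Finset.sum_congr rfl fun l2 hl2 => ?_
    rw [ratio l2 hl2, asc_nat_succ, asc_nat_succ, hC]
    ring
  have rhs_eq : (∑ l2 ∈ range (n + 1),
      (j1.factorial : ℝ) * (j2.factorial : ℝ) *
        (((l1 + j1).choose l1 : ℝ) * (j2.choose l2 : ℝ) *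
          ((m.factorial : ℝ) /
              ((l1.factorial : ℝ) * (l2.factorial : ℝ) * ((n - l2).factorial : ℝ))) *
          (1 - θ1) ^ (n - l2) * θ1 ^ l1 * θ2 ^ l2))
      = C * ∑ l2 ∈ range (n + 1),
          (j2.choose l2 : ℝ) * (n.choose l2 : ℝ) * ((1 - θ1 - θ2) + θ2) ^ (n - l2)
            * θ2 ^ l2 := by
    rw [Finset.mul_sum]
    refine Finset.sum_congr rfl fun l2 hl2 => ?_
    rw [ratio l2 hl2, hC]
    have : (1 - θ1 - θ2) + θ2 = 1 - θ1 := by ring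
    rw [this]
    ring
  rw [lhs_eq]
  conv_rhs => rw [Finset.mul_sum]
  rw [rhs_eq, key]
end
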